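/- arXiv:0811.2958 — 2 statements merged into one kernel-verified Lean document; each statement's English description precedes it below -/
import Mathlib

section
/- For every real number α there exists a sequence a_1, a_2, … with a_n ∈ {1, −1} for all n such that the series ∑_{n=1}^∞ a_n/n converges and ∑_{n=1}^∞ a_n/n = α. -/
open Filter Topology

noncomputable def Sgreedy (α : ℝ) : ℕ → ℝ
  | 0 => 0
  | n + 1 => Sgreedy α n + (if Sgreedy α n ≤ α then 1 else -1) / (n + 1)

lemma Sgreedy_step_bound (α : ℝ) (n : ℕ) :
    |Sgreedy α (n + 1) - α| ≤ max |Sgreedy α n - α| (1 / (n + 1)) := by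
  have ht : (0 : ℝ) < 1 / (n + 1) := by positivity
  by_cases h : Sgreedy α n ≤ α
  · have hS : Sgreedy α (n + 1) = Sgreedy α n + 1 / (n + 1) := by
      simp [Sgreedy, h]
    rcases le_or_gt 0 (Sgreedy α (n + 1) - α) with h2 | h2
    · rw [abs_of_nonneg h2, hS]
      have : Sgreedy α n + 1 / (n + 1) - α ≤ 1 / (n + 1) := by linarith
      exact this.trans (le_max_right _ _)
    · rw [abs_of_neg h2]
      have : -(Sgreedy α (n + 1) - α) ≤ |Sgreedy α n - α| := by
        rw [abs_of_nonpos (by linarith)]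
        rw [hS]; linarith
      exact this.trans (le_max_left _ _)
  · push_neg at h
    have hS : Sgreedy α (n + 1) = Sgreedy α n - 1 / (n + 1) := by
      simp [Sgreedy, not_le.2 h]; ring
    rcases le_or_gt 0 (Sgreedy α (n + 1) - α) with h2 | h2
    · rw [abs_of_nonneg h2]
      have : Sgreedy α (n + 1) - α ≤ |Sgreedy α n - α| := by
        rw [abs_of_nonneg (by linarith)]; rw [hS]; linarith
      exact this.trans (le_max_left _ _)
    · rw [abs_of_neg h2, hS]
      have : -(Sgreedy α n - 1 / (n + 1) - α) ≤ 1 / (n + 1) := by linarith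
      exact this.trans (le_max_right _ _)

lemma Sgreedy_stay (α : ℝ) (m : ℕ) (hm : 1 ≤ m) (h : |Sgreedy α m - α| ≤ 1 / m) :
    ∀ k, m ≤ k → |Sgreedy α k - α| ≤ 1 / m := by
  intro k hk
  induction k, hk using Nat.le_induction with
  | base => exact h
  | succ k hk ih =>
    refine (Sgreedy_step_bound α k).trans (max_le ih ?_)
    apply one_div_le_one_div_of_le
    · exact_mod_cast hm
    · push_cast
      have : (m : ℝ) ≤ k := by exact_mod_cast hk
      linarith

lemma Sgreedy_cross (α : ℝ) (N : ℕ) :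
    ∃ m, N ≤ m ∧ |Sgreedy α (m + 1) - α| ≤ 1 / (m + 1) := by
  by_contra hcon
  push_neg at hcon
  -- no crossing at any m ≥ N
  have hsame : ∀ m, N ≤ m → (Sgreedy α m ≤ α ↔ Sgreedy α N ≤ α) := by
    intro m hm
    induction m, hm using Nat.le_induction with
    | base => rfl
    | succ m hm ih =>
      rw [← ih]
      have hpos : (0 : ℝ) < 1 / (m + 1 : ℝ) := by positivity
      constructor
      · intro h1
        by_contra h2
        push_neg at h2
        have hS : Sgreedy α (m + 1) = Sgreedy α m - 1 / (m + 1) := by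
          simp [Sgreedy, not_le.2 h2]; ring
        have := hcon m hm
        rw [abs_of_nonpos (by rw [hS]; linarith), hS] at this
        push_cast at this ⊢
        linarith
      · intro h1
        by_contra h2
        push_neg at h2
        have hS : Sgreedy α (m + 1) = Sgreedy α m + 1 / (m + 1) := by
          simp [Sgreedy, h1]
        have := hcon m hm
        rw [abs_of_nonneg (by rw [hS]; linarith), hS] at this
        push_cast at this ⊢
        linarith
  set H : ℕ → ℝ := fun n => ∑ i ∈ Finset.range n, (1 / (i + 1) : ℝ) with hH
  have hdiv := Real.tendsto_sum_range_one_div_nat_succ_atTop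
  by_cases hN : Sgreedy α N ≤ α
  · -- always adding 1/(k+1): S (N+k) = S N + H (N+k) - H N
    have key : ∀ k, Sgreedy α (N + k) = Sgreedy α N + H (N + k) - H N := by
      intro k
      induction k with
      | zero => simp
      | succ k ih =>
        have hk : Sgreedy α (N + k) ≤ α := (hsame (N + k) (Nat.le_add_right _ _)).2 hN
        show Sgreedy α ((N + k) + 1) = _
        simp only [Sgreedy, hk, if_true]
        have hstep : H (N + k + 1) = H (N + k) + 1 / ((N + k : ℕ) + 1 : ℝ) :=
          Finset.sum_range_succ _ _
        rw [show N + (k + 1) = (N + k) + 1 from rfl, hstep, ih]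
        push_cast
        ring
    have hbdd : ∀ k, H (N + k) ≤ α - Sgreedy α N + H N := by
      intro k
      have h1 : Sgreedy α (N + k) ≤ α := (hsame (N + k) (Nat.le_add_right _ _)).2 hN
      rw [key k] at h1; linarith
    obtain ⟨M, hM⟩ := (tendsto_atTop.1 hdiv (α - Sgreedy α N + H N + 1)).exists_forall_of_atTop
    have := hbdd M
    have h2 := hM (N + M) (Nat.le_add_left _ _)
    linarith
  · push_neg at hN
    have key : ∀ k, Sgreedy α (N + k) = Sgreedy α N - (H (N + k) - H N) := by
      intro k
      induction k with
      | zero => simp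
      | succ k ih =>
        have hk : ¬ Sgreedy α (N + k) ≤ α := fun h =>
          absurd ((hsame (N + k) (Nat.le_add_right _ _)).1 h) (not_le.2 hN)
        show Sgreedy α ((N + k) + 1) = _
        simp only [Sgreedy, hk, if_false]
        have hstep : H (N + k + 1) = H (N + k) + 1 / ((N + k : ℕ) + 1 : ℝ) :=
          Finset.sum_range_succ _ _
        rw [show N + (k + 1) = (N + k) + 1 from rfl, hstep, ih]
        push_cast
        ring
    have hbdd : ∀ k, H (N + k) ≤ Sgreedy α N - α + H N := by
      intro k
      have h1 : α < Sgreedy α (N + k) :=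
        lt_of_not_ge fun h => absurd ((hsame (N + k) (Nat.le_add_right _ _)).1 h) (not_le.2 hN)
      rw [key k] at h1; linarith
    obtain ⟨M, hM⟩ := (tendsto_atTop.1 hdiv (Sgreedy α N - α + H N + 1)).exists_forall_of_atTop
    have := hbdd M
    have h2 := hM (N + M) (Nat.le_add_left _ _)
    linarith

/-- For every real number `α` there is a choice of signs `a n ∈ {1, -1}` such that the
series `∑_{n=1}^∞ a n / n` converges (in the sense of its partial sums) to `α`. -/
theorem signed_harmonic_realises_every_real (α : ℝ) :
    ∃ a : ℕ → ℝ, (∀ n : ℕ, 1 ≤ n → a n = 1 ∨ a n = -1) ∧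
      Tendsto (fun N : ℕ => ∑ n ∈ Finset.Icc 1 N, a n / (n : ℝ)) atTop (𝓝 α) := by
  refine ⟨fun n => if Sgreedy α (n - 1) ≤ α then 1 else -1, fun n _ => by by_cases h : Sgreedy α (n - 1) ≤ α <;> simp [h], ?_⟩
  have hsum : ∀ N : ℕ, ∑ n ∈ Finset.Icc 1 N,
      (if Sgreedy α (n - 1) ≤ α then (1 : ℝ) else -1) / (n : ℝ) = Sgreedy α N := by
    intro N
    induction N with
    | zero => simp [Sgreedy]
    | succ N ih =>
      rw [Finset.sum_Icc_succ_top (Nat.one_le_iff_ne_zero.2 (Nat.succ_ne_zero N)), ih]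
      show _ = Sgreedy α (N + 1)
      simp only [Sgreedy, Nat.add_sub_cancel]
      push_cast
      ring
  simp only [hsum]
  rw [Metric.tendsto_atTop]
  intro ε hε
  obtain ⟨m0, hm0⟩ := exists_nat_one_div_lt hε
  obtain ⟨m, hm, habs⟩ := Sgreedy_cross α m0
  refine ⟨m + 1, fun k hk => ?_⟩
  have h1 : |Sgreedy α k - α| ≤ 1 / (m + 1 : ℝ) := by
    have := Sgreedy_stay α (m + 1) (Nat.le_add_left 1 m) (by push_cast at habs ⊢; exact habs) k hk
    push_cast at this ⊢
    exact this
  have h2 : (1 : ℝ) / (m + 1) ≤ 1 / (m0 + 1) := by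
    apply one_div_le_one_div_of_le
    · positivity
    · push_cast
      have : (m0 : ℝ) ≤ m := by exact_mod_cast hm
      linarith
  rw [Real.dist_eq]
  calc |Sgreedy α k - α| ≤ 1 / (m + 1 : ℝ) := h1
    _ ≤ 1 / (m0 + 1) := h2
    _ < ε := hm0
end

section
/- The dyadic cobweb framework G_∞ is infinitesimally flexible: it possesses a proper infinitesimal flex, i.e. an infinitesimal flex u = (u_1, u_2, …) that does not belong to the three-dimensional space of infinitesimal flexes arising from isometric motions of ℝ². Consequently, since G_∞ is continuously rigid, an infinite framework may be continuously rigid without being infinitesimally rigid. -/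
noncomputable section

open Set
open scoped InnerProductSpace

/-- Points of the Euclidean plane. -/
abbrev Pt : Type := EuclideanSpace ℝ (Fin 2)

/-- The point of the Euclidean plane with coordinates `(a, b)`. -/
def pt (a b : ℝ) : Pt := (WithLp.equiv 2 (Fin 2 → ℝ)).symm ![a, b]

/-- Rotation of the plane by a right angle, `(x, y) ↦ (-y, x)`: the velocity field of the
infinitesimal rotation about the origin. -/
def rot (q : Pt) : Pt := pt (-(q 1)) (q 0)

/-- The four corners `(1,1), (1,-1), (-1,-1), (-1,1)` of the unit square, in cyclic order. -/
def corner : Fin 4 → Pt := ![pt 1 1, pt 1 (-1), pt (-1) (-1), pt (-1) 1]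

/-- The abstract graph of the (one-way infinite) cobweb framework: vertices `(k, m)` with
`k ∈ ℕ` and `m ∈ Fin 4`; for each `k` the four square edges `(k,m)–(k,m+1)` (cyclically),
and the connecting edges `(k,m)–(k+1,m)` between corresponding corners of consecutive
squares. -/
def cobwebGraph : SimpleGraph (ℕ × Fin 4) :=
  SimpleGraph.fromRel (fun a b =>
    (a.1 = b.1 ∧ b.2 = a.2 + 1) ∨ (a.2 = b.2 ∧ b.1 = a.1 + 1))

/-- The framework points of the dyadic cobweb framework `G_∞`: the corner `m` of the
square of scale `2⁻ᵏ`. -/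
def cob (v : ℕ × Fin 4) : Pt := ((2 : ℝ) ^ v.1)⁻¹ • corner v.2

/-- The flex: rotate the outer square, fix everything else. -/
def myFlex (v : ℕ × Fin 4) : Pt := if v.1 = 0 then rot (cob v) else 0

lemma inner2 (x y : Pt) : ⟪x, y⟫_ℝ = x 0 * y 0 + x 1 * y 1 := by
  simp [PiLp.inner_apply, Fin.sum_univ_two]
  ring

lemma rot_apply0 (q : Pt) : rot q 0 = -(q 1) := rfl
lemma rot_apply1 (q : Pt) : rot q 1 = q 0 := rfl
lemma cob_apply (v : ℕ × Fin 4) (i : Fin 2) :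
    cob v i = ((2 : ℝ) ^ v.1)⁻¹ * corner v.2 i := rfl
lemma sub_apply' (x y : Pt) (i : Fin 2) : (x - y) i = x i - y i := rfl
lemma add_apply' (x y : Pt) (i : Fin 2) : (x + y) i = x i + y i := rfl
lemma smul_apply' (c : ℝ) (x : Pt) (i : Fin 2) : (c • x) i = c * x i := rfl
lemma zero_apply' (i : Fin 2) : (0 : Pt) i = 0 := rfl

lemma skew (x y : Pt) : ⟪x - y, rot x - rot y⟫_ℝ = 0 := by
  rw [inner2, sub_apply', sub_apply', sub_apply', sub_apply',
    rot_apply0, rot_apply0, rot_apply1, rot_apply1]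
  ring

lemma key (a b : ℕ × Fin 4)
    (h : (a.1 = b.1 ∧ b.2 = a.2 + 1) ∨ (a.2 = b.2 ∧ b.1 = a.1 + 1)) :
    ⟪cob a - cob b, myFlex a - myFlex b⟫_ℝ = 0 := by
  obtain ⟨k, m⟩ := a
  obtain ⟨k', m'⟩ := b
  rcases h with ⟨hk, hm⟩ | ⟨hm, hk⟩
  · simp only at hk hm
    subst hk; subst hm
    rcases Nat.eq_zero_or_pos k with hk0 | hk0
    · subst hk0
      simp only [myFlex, if_pos rfl]
      exact skew _ _
    · have : k ≠ 0 := Nat.pos_iff_ne_zero.mp hk0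
      simp [myFlex, this]
  · simp only at hk hm
    subst hm; subst hk
    rcases Nat.eq_zero_or_pos k with hk0 | hk0
    · subst hk0
      rw [show myFlex (0, m) = rot (cob (0, m)) from if_pos rfl,
        show myFlex (0 + 1, m) = (0 : Pt) from if_neg one_ne_zero, sub_zero]
      simp only [inner2, sub_apply', rot_apply0, rot_apply1, cob_apply]
      ring
    · have h1 : k ≠ 0 := Nat.pos_iff_ne_zero.mp hk0
      have h2 : k + 1 ≠ 0 := Nat.succ_ne_zero k
      simp [myFlex, h1, h2]

/-- The dyadic cobweb framework `G_∞` is infinitesimally flexible: it has a proper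
infinitesimal flex, i.e. a sequence `u` of vectors with `⟪p_i - p_j, u_i - u_j⟫ = 0` for
every edge, which is not the restriction to the framework points of the velocity field
of a rigid motion of the plane (a translation field plus a multiple of the rotation
field, which form the three-dimensional space of trivial infinitesimal flexes). -/
theorem cobweb_infinitesimally_flexible :
    ∃ u : ℕ × Fin 4 → Pt,
      (∀ a b, cobwebGraph.Adj a b → ⟪cob a - cob b, u a - u b⟫_ℝ = 0) ∧
      ¬ ∃ (c : Pt) (ρ : ℝ), ∀ a, u a = c + ρ • rot (cob a) := by
  refine ⟨myFlex, ?_, ?_⟩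
  · intro a b hadj
    rw [cobwebGraph, SimpleGraph.fromRel_adj] at hadj
    obtain ⟨-, h | h⟩ := hadj
    · exact key a b h
    · have := key b a h
      rw [← neg_sub (cob b) (cob a), ← neg_sub (myFlex b) (myFlex a),
        inner_neg_neg]
      exact this
  · rintro ⟨c, ρ, h⟩
    have e1 : (0 : ℝ) = c 0 + ρ * (-((2 : ℝ)⁻¹ * 1)) := by
      have := congrArg (· 0) (h (1, 0))
      simpa [myFlex, add_apply', smul_apply', rot_apply0, cob_apply,
        corner, pt, zero_apply'] using this
    have e2 : (0 : ℝ) = c 0 + ρ * (-(((2 : ℝ) ^ 2)⁻¹ * 1)) := by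
      have := congrArg (· 0) (h (2, 0))
      simpa [myFlex, add_apply', smul_apply', rot_apply0, cob_apply,
        corner, pt, zero_apply'] using this
    have e3 : (-(1 : ℝ)) = c 0 + ρ * (-(1 : ℝ)) := by
      have := congrArg (· 0) (h (0, 0))
      simpa [myFlex, add_apply', smul_apply', rot_apply0, rot_apply0, cob_apply,
        corner, pt, zero_apply'] using this
    norm_num at e1 e2 e3
    linarith
end
end
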